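/- Let $\Gamma$ be a graph satisfying doubling (D$_\beta$) and the pointwise upper bound (UE$_\beta$): for every $N$, $p_{k-1}(x,y) \le \frac{C_N}{V_\rho(x,k)}(1+\rho(x,y)/k)^{-N}$. Then the matching on-diagonal lower bound holds: $p_{2k}(x,x) \ge \frac{c}{V_\rho(x,k)}$ for all $x \in \Gamma$ and $k \ge 1$; consequently $p_{2k}(x,x) \simeq V_\rho(x,k)^{-1}$. -/

import Mathlib

/-- The weight `m(x) = ∑_y μ_{xy}` of a vertex of a weighted graph. -/
noncomputable def graphMeasure {Γ : Type*} (μ : Γ → Γ → ℝ) (x : Γ) : ℝ := ∑' y, μ x y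

/-- The reversible Markov kernel `p(x,y) = μ_{xy}/(m(x)m(y))`. -/
noncomputable def graphKernel {Γ : Type*} (μ : Γ → Γ → ℝ) (x y : Γ) : ℝ :=
  μ x y / (graphMeasure μ x * graphMeasure μ y)

open Classical in
/-- The iterated kernels. -/
noncomputable def iterKernel {Γ : Type*} (μ : Γ → Γ → ℝ) : ℕ → Γ → Γ → ℝ
  | 0, x, y => (if x = y then 1 else 0) / graphMeasure μ y
  | k + 1, x, y => ∑' z, graphKernel μ x z * iterKernel μ k z y * graphMeasure μ z

/-- The volume `V_ρ(x,r)` of the quasidistance ball with vertex weights `m`. -/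
noncomputable def ballVol {Γ : Type*} (m : Γ → ℝ) (ρ : Γ → Γ → ℝ) (x : Γ) (r : ℝ) : ℝ :=
  ∑' y : {y : Γ // ρ x y < r}, m y.1

section Aux
variable {Γ : Type*} (μ : Γ → Γ → ℝ)

section Basic
variable (hsym : ∀ x y, μ x y = μ y x) (hnonneg : ∀ x y, 0 ≤ μ x y)
  (hfin : ∀ x, {y | μ x y ≠ 0}.Finite) (hpos : ∀ x, 0 < graphMeasure μ x)

open Classical

include hnonneg hpos in
lemma kernel_nonneg : ∀ x y, 0 ≤ graphKernel μ x y := fun x y =>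
  div_nonneg (hnonneg x y) (le_of_lt (mul_pos (hpos x) (hpos y)))

lemma kernel_eq_zero {x y : Γ} (h : μ x y = 0) : graphKernel μ x y = 0 := by
  simp [graphKernel, h]

include hsym in
lemma kernel_symm (x y : Γ) : graphKernel μ x y = graphKernel μ y x := by
  simp [graphKernel, hsym x y, mul_comm]

include hnonneg hpos in
lemma iter_nonneg : ∀ k x y, 0 ≤ iterKernel μ k x y := by
  intro k
  induction k with
  | zero => intro x y; simp only [iterKernel]
            exact div_nonneg (by positivity) (hpos y).le
  | succ k ih => intro x y
                 simp only [iterKernel]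
                 exact tsum_nonneg fun z => mul_nonneg
                   (mul_nonneg (kernel_nonneg μ hnonneg hpos x z) (ih z y)) (hpos z).le

include hfin in
lemma iter_finsupp : ∀ k x, {y | iterKernel μ k x y ≠ 0}.Finite := by
  intro k
  induction k with
  | zero =>
    intro x
    apply Set.Finite.subset (Set.finite_singleton x)
    intro y hy
    simp only [Set.mem_setOf_eq, iterKernel] at hy
    by_contra h
    exact hy (by rw [if_neg (fun hh => h hh.symm), zero_div])
  | succ k ih =>
    intro x
    apply Set.Finite.subset ((hfin x).biUnion (fun z _ => ih z))
    intro y hy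
    simp only [Set.mem_setOf_eq, iterKernel] at hy
    have : ∃ z, graphKernel μ x z * iterKernel μ k z y * graphMeasure μ z ≠ 0 := by
      by_contra h
      push_neg at h
      exact hy (by simp [h, tsum_zero])
    obtain ⟨z, hz⟩ := this
    have h1 : μ x z ≠ 0 := by
      intro h0
      exact hz (by simp [kernel_eq_zero μ h0])
    have h2 : iterKernel μ k z y ≠ 0 := by
      intro h0; exact hz (by simp [h0])
    exact Set.mem_biUnion h1 h2


include hfin in
lemma step_summable (x : Γ) (g : Γ → ℝ) :
    Summable (fun z => graphKernel μ x z * g z) := by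
  apply summable_of_ne_finset_zero (s := (hfin x).toFinset)
  intro z hz
  rw [Set.Finite.mem_toFinset] at hz
  simp only [Set.mem_setOf_eq, not_not] at hz
  rw [kernel_eq_zero μ hz, zero_mul]

include hfin in
lemma iter_summable (k : ℕ) (x : Γ) (g : Γ → ℝ) :
    Summable (fun y => iterKernel μ k x y * g y) := by
  apply summable_of_ne_finset_zero (s := (iter_finsupp μ hfin k x).toFinset)
  intro y hy
  rw [Set.Finite.mem_toFinset] at hy
  simp only [Set.mem_setOf_eq, not_not] at hy
  rw [hy, zero_mul]

include hfin in
lemma iter_succ_sum (k : ℕ) (x y : Γ) {s : Finset Γ}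
    (hs : ∀ z, μ x z ≠ 0 → z ∈ s) :
    iterKernel μ (k + 1) x y
      = ∑ z ∈ s, graphKernel μ x z * iterKernel μ k z y * graphMeasure μ z := by
  show (∑' z, graphKernel μ x z * iterKernel μ k z y * graphMeasure μ z) = _
  apply tsum_eq_sum
  intro z hz
  have : μ x z = 0 := by by_contra h; exact hz (hs z h)
  rw [kernel_eq_zero μ this, zero_mul, zero_mul]

include hpos in
lemma iter_zero (x y : Γ) :
    iterKernel μ 0 x y = (if x = y then 1 else 0) / graphMeasure μ y := rfl

include hpos in
lemma iter_one (x y : Γ) : iterKernel μ 1 x y = graphKernel μ x y := by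
  show (∑' z, graphKernel μ x z * iterKernel μ 0 z y * graphMeasure μ z) = _
  rw [tsum_eq_single y]
  · simp only [iterKernel]
    rw [if_true]
    field_simp
    exact mul_div_cancel_right₀ _ (hpos y).ne'
  · intro z hz
    simp only [iterKernel, if_neg (fun h : z = y => hz h), zero_div, mul_zero, zero_mul]

include hfin hpos in
lemma iter_CK (a b : ℕ) (x y : Γ) :
    iterKernel μ (a + b) x y
      = ∑' z, iterKernel μ a x z * iterKernel μ b z y * graphMeasure μ z := by
  induction a generalizing x with
  | zero =>
    rw [zero_add, tsum_eq_single x]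
    · simp only [iterKernel]
      rw [if_true]
      field_simp
      exact (mul_div_cancel_right₀ _ (hpos x).ne').symm
    · intro z hz
      simp only [iterKernel, if_neg (fun h : x = z => hz h.symm), zero_div, zero_mul]
  | succ a ih =>
    have hab : a + 1 + b = (a + b) + 1 := by omega
    rw [hab]
    set F := (hfin x).toFinset with hF
    have hmem : ∀ z, μ x z ≠ 0 → z ∈ F := fun z hz => by
      rw [hF, Set.Finite.mem_toFinset]; exact hz
    set W := F.biUnion (fun z => (iter_finsupp μ hfin a z).toFinset) with hW
    rw [iter_succ_sum μ hfin (a+b) x y hmem]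
    have step1 : ∀ z, iterKernel μ (a + b) z y
        = ∑ w ∈ W, iterKernel μ a z w * iterKernel μ b w y * graphMeasure μ w → True :=
      fun _ _ => trivial
    have key : ∀ z ∈ F, graphKernel μ x z * iterKernel μ (a+b) z y * graphMeasure μ z
        = ∑ w ∈ W, graphKernel μ x z *
            (iterKernel μ a z w * iterKernel μ b w y * graphMeasure μ w) * graphMeasure μ z := by
      intro z hzF
      rw [ih z]
      rw [tsum_eq_sum (s := W)]
      · rw [Finset.mul_sum, Finset.sum_mul]
      · intro w hw
        have : iterKernel μ a z w = 0 := by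
          by_contra h
          exact hw (Finset.mem_biUnion.2 ⟨z, hzF, by rw [Set.Finite.mem_toFinset]; exact h⟩)
        rw [this, zero_mul, zero_mul]
    rw [Finset.sum_congr rfl key, Finset.sum_comm]
    have rhs : (∑' w, iterKernel μ (a+1) x w * iterKernel μ b w y * graphMeasure μ w)
        = ∑ w ∈ W, iterKernel μ (a+1) x w * iterKernel μ b w y * graphMeasure μ w := by
      apply tsum_eq_sum
      intro w hw
      have : iterKernel μ (a+1) x w = 0 := by
        by_contra h
        have hex : ∃ z, graphKernel μ x z * iterKernel μ a z w * graphMeasure μ z ≠ 0 := by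
          by_contra hc
          push_neg at hc
          exact h (by simp only [iterKernel]; simp [hc, tsum_zero])
        obtain ⟨z, hz⟩ := hex
        have h1 : μ x z ≠ 0 := fun h0 => hz (by simp [kernel_eq_zero μ h0])
        have h2 : iterKernel μ a z w ≠ 0 := fun h0 => hz (by simp [h0])
        exact hw (Finset.mem_biUnion.2 ⟨z, hmem z h1, by rw [Set.Finite.mem_toFinset]; exact h2⟩)
      rw [this, zero_mul, zero_mul]
    rw [rhs]
    apply Finset.sum_congr rfl
    intro w _
    rw [iter_succ_sum μ hfin a x w hmem, Finset.sum_mul, Finset.sum_mul]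
    apply Finset.sum_congr rfl
    intro z _
    ring


include hsym hfin hpos in
lemma iter_symm (k : ℕ) (x y : Γ) : iterKernel μ k x y = iterKernel μ k y x := by
  induction k generalizing x y with
  | zero =>
    simp only [iterKernel]
    rcases eq_or_ne x y with h | h
    · rw [h]
    · rw [if_neg h, if_neg (Ne.symm h), zero_div, zero_div]
  | succ k ih =>
    have h1 : iterKernel μ (k+1) y x
        = ∑' z, iterKernel μ k y z * iterKernel μ 1 z x * graphMeasure μ z :=
      iter_CK μ hfin hpos k 1 y x
    rw [h1]
    show (∑' z, graphKernel μ x z * iterKernel μ k z y * graphMeasure μ z) = _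
    apply tsum_congr
    intro z
    rw [iter_one μ hpos, ih z y, kernel_symm μ hsym x z, kernel_symm μ hsym z x]
    ring

include hfin hpos in
lemma measure_eq_sum (x : Γ) : graphMeasure μ x = ∑ z ∈ (hfin x).toFinset, μ x z := by
  apply tsum_eq_sum
  intro z hz
  rw [Set.Finite.mem_toFinset] at hz
  simpa using hz

include hfin hpos in
lemma kernel_mass (x : Γ) : (∑' z, graphKernel μ x z * graphMeasure μ z) = 1 := by
  rw [tsum_eq_sum (s := (hfin x).toFinset) (fun z hz => by
    rw [Set.Finite.mem_toFinset] at hz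
    rw [kernel_eq_zero μ (by simpa using hz), zero_mul])]
  have : ∀ z ∈ (hfin x).toFinset, graphKernel μ x z * graphMeasure μ z
      = μ x z / graphMeasure μ x := by
    intro z hz
    rw [Set.Finite.mem_toFinset] at hz
    unfold graphKernel
    field_simp [(hpos z).ne']
  rw [Finset.sum_congr rfl this, ← Finset.sum_div, ← measure_eq_sum μ hfin hpos,
    div_self (hpos x).ne']

include hfin hpos in
lemma iter_mass (k : ℕ) (x : Γ) :
    (∑' y, iterKernel μ k x y * graphMeasure μ y) = 1 := by
  induction k generalizing x with
  | zero =>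
    rw [tsum_eq_single x]
    · simp only [iterKernel]
      rw [if_true]
      field_simp
      exact div_self (hpos x).ne'
    · intro z hz
      simp only [iterKernel, if_neg (fun h : x = z => hz h.symm), zero_div, zero_mul]
  | succ k ih =>
    set F := (hfin x).toFinset with hF
    have hmem : ∀ z, μ x z ≠ 0 → z ∈ F := fun z hz => by
      rw [hF, Set.Finite.mem_toFinset]; exact hz
    have expand : ∀ y, iterKernel μ (k+1) x y * graphMeasure μ y
        = ∑ z ∈ F, graphKernel μ x z * (iterKernel μ k z y * graphMeasure μ y)
            * graphMeasure μ z := by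
      intro y
      rw [iter_succ_sum μ hfin k x y hmem, Finset.sum_mul]
      exact Finset.sum_congr rfl fun z _ => by ring
    rw [tsum_congr expand, Summable.tsum_finsetSum (fun z _ => ?_)]
    · have : ∀ z ∈ F, (∑' y, graphKernel μ x z * (iterKernel μ k z y * graphMeasure μ y)
          * graphMeasure μ z) = graphKernel μ x z * graphMeasure μ z := by
        intro z _
        have : (∑' y, graphKernel μ x z * (iterKernel μ k z y * graphMeasure μ y)
            * graphMeasure μ z) = graphKernel μ x z
              * (∑' y, iterKernel μ k z y * graphMeasure μ y) * graphMeasure μ z := by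
          rw [tsum_mul_right, tsum_mul_left]
        rw [this, ih z, mul_one]
      rw [Finset.sum_congr rfl this, ← tsum_eq_sum (L := SummationFilter.unconditional Γ) (s := F) (fun z hz => by
        rw [kernel_eq_zero μ (by rw [hF, Set.Finite.mem_toFinset] at hz; simpa using hz),
          zero_mul])]
      exact kernel_mass μ hfin hpos x
    · have : (fun y => graphKernel μ x z * (iterKernel μ k z y * graphMeasure μ y)
          * graphMeasure μ z) = fun y => iterKernel μ k z y
            * (graphMeasure μ y * (graphKernel μ x z * graphMeasure μ z)) := by
        funext y; ring
      rw [this]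
      exact iter_summable μ hfin k z _


include hsym hfin hpos in
lemma iter_diag (k : ℕ) (x : Γ) :
    iterKernel μ (2 * k) x x
      = ∑' y, (iterKernel μ k x y)^2 * graphMeasure μ y := by
  have : 2 * k = k + k := by omega
  rw [this, iter_CK μ hfin hpos k k x x]
  apply tsum_congr
  intro y
  rw [iter_symm μ hsym hfin hpos k y x, sq]

include hfin in
lemma iter_sq_summable (k : ℕ) (x : Γ) :
    Summable (fun y => (iterKernel μ k x y)^2 * graphMeasure μ y) := by
  have : (fun y => (iterKernel μ k x y)^2 * graphMeasure μ y)
      = fun y => iterKernel μ k x y * (iterKernel μ k x y * graphMeasure μ y) := by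
    funext y; ring
  rw [this]
  exact iter_summable μ hfin k x _

include hnonneg hfin hpos in
lemma iter_exists_pos (k : ℕ) (x : Γ) : ∃ y, 0 < iterKernel μ k x y := by
  by_contra h
  push_neg at h
  have hz : ∀ y, iterKernel μ k x y = 0 := fun y =>
    le_antisymm (h y) (iter_nonneg μ hnonneg hpos k x y)
  have h1 := iter_mass μ hfin hpos k x
  have h2 : (∑' y, iterKernel μ k x y * graphMeasure μ y) = 0 := by
    rw [tsum_congr (fun y => by rw [hz y, zero_mul])]
    exact tsum_zero
  rw [h2] at h1
  exact zero_ne_one h1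

include hsym hnonneg hfin hpos in
lemma iter_diag_pos (k : ℕ) (x : Γ) : 0 < iterKernel μ (2 * k) x x := by
  rw [iter_diag μ hsym hfin hpos k x]
  obtain ⟨y, hy⟩ := iter_exists_pos μ hnonneg hfin hpos k x
  have hterm : 0 < (iterKernel μ k x y)^2 * graphMeasure μ y :=
    mul_pos (pow_pos hy 2) (hpos y)
  calc (0:ℝ) < (iterKernel μ k x y)^2 * graphMeasure μ y := hterm
    _ ≤ ∑' y, (iterKernel μ k x y)^2 * graphMeasure μ y :=
        Summable.le_tsum (iter_sq_summable μ hfin k x) y (fun z _ =>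
          mul_nonneg (sq_nonneg _) (hpos z).le)

end Basic

section Vol
variable (ρ : Γ → Γ → ℝ) (hpos : ∀ x, 0 < graphMeasure μ x)

lemma vol_eq_indicator (x : Γ) (r : ℝ) :
    ballVol (graphMeasure μ) ρ x r
      = ∑' y, Set.indicator {y | ρ x y < r} (graphMeasure μ) y :=
  tsum_subtype _ _

include hpos in
lemma indicator_m_nonneg (x : Γ) (r : ℝ) (y : Γ) :
    0 ≤ Set.indicator {y | ρ x y < r} (graphMeasure μ) y :=
  Set.indicator_nonneg (fun z _ => (hpos z).le) y

include hpos in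
lemma vol_mono (x : Γ) {r1 r2 : ℝ} (h : r1 ≤ r2)
    (hsum : Summable (Set.indicator {y | ρ x y < r2} (graphMeasure μ))) :
    ballVol (graphMeasure μ) ρ x r1 ≤ ballVol (graphMeasure μ) ρ x r2 := by
  rw [vol_eq_indicator, vol_eq_indicator]
  have hle : ∀ y, Set.indicator {y | ρ x y < r1} (graphMeasure μ) y
      ≤ Set.indicator {y | ρ x y < r2} (graphMeasure μ) y :=
    fun y => Set.indicator_le_indicator_of_subset
      (fun z hz => lt_of_lt_of_le hz h) (fun z => (hpos z).le) y
  exact Summable.tsum_le_tsum hle (Summable.of_nonneg_of_le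
    (indicator_m_nonneg μ ρ hpos x r1) hle hsum) hsum

include hpos in
lemma sum_le_vol (x : Γ) (r : ℝ) (s : Finset Γ) (hs : ∀ y ∈ s, ρ x y < r)
    (hsum : Summable (Set.indicator {y | ρ x y < r} (graphMeasure μ))) :
    ∑ y ∈ s, graphMeasure μ y ≤ ballVol (graphMeasure μ) ρ x r := by
  rw [vol_eq_indicator]
  have : ∀ y ∈ s, graphMeasure μ y
      = Set.indicator {y | ρ x y < r} (graphMeasure μ) y := by
    intro y hy
    exact (Set.indicator_of_mem (show y ∈ {y | ρ x y < r} from hs y hy) _).symm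
  rw [Finset.sum_congr rfl this]
  exact Summable.sum_le_tsum s (fun y _ => indicator_m_nonneg μ ρ hpos x r y) hsum


lemma geom_half_le_two (n : ℕ) : ∑ j ∈ Finset.range n, ((1:ℝ)/2)^j ≤ 2 := by
  rw [geom_sum_eq (by norm_num)]
  have h : (0:ℝ) ≤ (1/2:ℝ)^n := by positivity
  have e : ((1/2:ℝ)^n - 1)/((1/2:ℝ) - 1) = 2 - 2*(1/2:ℝ)^n := by ring
  rw [e]
  linarith

include hpos in
lemma annuli_bound (hρn : ∀ x y, 0 ≤ ρ x y)
    (Cd d : ℝ) (hCd : 0 < Cd) (hd : 0 < d)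
    (hdouble : ∀ x : Γ, ∀ r lam : ℝ, 0 < r → 1 ≤ lam →
      ballVol (graphMeasure μ) ρ x (lam * r) ≤ Cd * lam ^ d * ballVol (graphMeasure μ) ρ x r)
    (x : Γ) (k : ℕ) (hk : 1 ≤ k) (N1 : ℕ) (hN1 : d + 1 ≤ N1)
    (hsb : ∀ r : ℝ, 0 < r → Summable (Set.indicator {y | ρ x y < r} (graphMeasure μ)))
    (hVk : 0 ≤ ballVol (graphMeasure μ) ρ x k)
    (s : Finset Γ) :
    ∑ y ∈ s, ((1 + ρ x y / k) ^ N1)⁻¹ * graphMeasure μ y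
      ≤ 2 ^ (N1 + 1) * Cd * ballVol (graphMeasure μ) ρ x k := by
  classical
  have hk' : (0:ℝ) < k := by exact_mod_cast hk
  have h12 : (1:ℝ) ≤ 2 := one_le_two
  have hone_le_pow : ∀ n : ℕ, (1:ℝ) ≤ 2 ^ n := fun n => by
    calc (1:ℝ) = 1 ^ n := (one_pow n).symm
      _ ≤ 2 ^ n := pow_le_pow_left₀ zero_le_one h12 n
  have hex : ∀ y : Γ, ∃ j : ℕ, ρ x y < 2 ^ j * k := by
    intro y
    obtain ⟨n, hn⟩ := pow_unbounded_of_one_lt (ρ x y) (one_lt_two (α := ℝ))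
    exact ⟨n, lt_of_lt_of_le hn (le_mul_of_one_le_right (by positivity)
      (by exact_mod_cast hk))⟩
  set idx : Γ → ℕ := fun y => Nat.find (hex y) with hidx
  set J := s.sup idx with hJ
  have hmaps : ∀ y ∈ s, idx y ∈ Finset.range (J + 1) := by
    intro y hy
    rw [Finset.mem_range]
    exact Nat.lt_succ_of_le (Finset.le_sup hy)
  rw [← Finset.sum_fiberwise_of_maps_to hmaps]
  set q : ℝ := (2:ℝ)^d * ((2:ℝ)^(N1:ℕ))⁻¹ with hqdef
  have hq0 : 0 ≤ q := by positivity
  have hpowN : (0:ℝ) < 2 ^ N1 := by positivity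
  have hq : q ≤ 1/2 := by
    have h2d : (2:ℝ)^d ≤ (2:ℝ)^(N1:ℕ) / 2 := by
      have h := Real.rpow_le_rpow_of_exponent_le h12 (show d ≤ (N1:ℝ)-1 by linarith)
      rwa [Real.rpow_sub two_pos, Real.rpow_one, Real.rpow_natCast] at h
    have := mul_le_mul_of_nonneg_right h2d (inv_nonneg.2 hpowN.le)
    rw [hqdef]
    calc (2:ℝ)^d * ((2:ℝ)^(N1:ℕ))⁻¹ ≤ ((2:ℝ)^(N1:ℕ)/2) * ((2:ℝ)^(N1:ℕ))⁻¹ := this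
      _ = 1/2 := by rw [div_mul_eq_mul_div, mul_inv_cancel₀ hpowN.ne']
  have fiber_bound : ∀ j ∈ Finset.range (J + 1),
      (∑ y ∈ s.filter (fun y => idx y = j), ((1 + ρ x y / k) ^ N1)⁻¹ * graphMeasure μ y)
        ≤ 2 ^ N1 * q ^ j * (Cd * ballVol (graphMeasure μ) ρ x k) := by
    intro j _
    have hfb : ∀ y ∈ s.filter (fun y => idx y = j),
        ((1 + ρ x y / k) ^ N1)⁻¹ ≤ 2 ^ N1 * (((2:ℝ)^(N1:ℕ))⁻¹) ^ j := by
      intro y hy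
      rw [Finset.mem_filter] at hy
      have h1 : (1:ℝ) ≤ 1 + ρ x y / k :=
        le_add_of_nonneg_right (div_nonneg (hρn x y) hk'.le)
      have h1p : (1:ℝ) ≤ (1 + ρ x y / k) ^ N1 := by
        calc (1:ℝ) = 1 ^ N1 := (one_pow _).symm
          _ ≤ (1 + ρ x y / k) ^ N1 := pow_le_pow_left₀ zero_le_one h1 N1
      rcases Nat.eq_zero_or_pos j with hj | hj
      · rw [hj, pow_zero, mul_one]
        calc ((1 + ρ x y / k) ^ N1)⁻¹ ≤ 1 := inv_le_one_of_one_le₀ h1p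
          _ ≤ 2 ^ N1 := hone_le_pow N1
      · have hfj : Nat.find (hex y) = j := hy.2
        have hmin : ¬ (ρ x y < 2 ^ (j-1) * k) :=
          Nat.find_min (hex y) (by rw [hfj]; omega)
        push_neg at hmin
        have h2 : (2:ℝ) ^ (j-1) ≤ 1 + ρ x y / k := by
          have h2' : (2:ℝ)^(j-1) ≤ ρ x y / k := (le_div_iff₀ hk').2 hmin
          linarith
        have h3 : ((2:ℝ)^(j-1))^N1 ≤ (1 + ρ x y / k)^N1 :=
          pow_le_pow_left₀ (by positivity) h2 N1
        have h4 : (0:ℝ) < ((2:ℝ)^(j-1))^N1 := by positivity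
        calc ((1 + ρ x y / k) ^ N1)⁻¹ ≤ (((2:ℝ)^(j-1))^N1)⁻¹ :=
              inv_anti₀ h4 h3
          _ = 2 ^ N1 * (((2:ℝ)^(N1:ℕ))⁻¹) ^ j := by
              have hnat : N1 * j = (j-1) * N1 + N1 := by
                have h5 : j - 1 + 1 = j := Nat.sub_add_cancel hj
                calc N1 * j = (j - 1 + 1) * N1 := by rw [h5]; ring
                  _ = (j-1) * N1 + N1 := by ring
              rw [← pow_mul, inv_pow, ← pow_mul, hnat, pow_add, mul_inv,
                mul_comm (((2:ℝ)^((j-1)*N1))⁻¹), ← mul_assoc,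
                mul_inv_cancel₀ hpowN.ne', one_mul]
    have hsub : ∀ y ∈ s.filter (fun y => idx y = j), ρ x y < (2:ℝ)^j * k := by
      intro y hy
      rw [Finset.mem_filter] at hy
      have hfj : Nat.find (hex y) = j := hy.2
      have := Nat.find_spec (hex y)
      rwa [hfj] at this
    have hmsum : (∑ y ∈ s.filter (fun y => idx y = j), graphMeasure μ y)
        ≤ ballVol (graphMeasure μ) ρ x ((2:ℝ)^j * k) :=
      sum_le_vol μ ρ hpos x _ _ hsub (hsb _ (by positivity))
    have hdbl : ballVol (graphMeasure μ) ρ x ((2:ℝ)^j * k)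
        ≤ Cd * ((2:ℝ)^d)^j * ballVol (graphMeasure μ) ρ x k := by
      have h := hdouble x k ((2:ℝ)^j) hk' (hone_le_pow j)
      have heq : ((2:ℝ)^j) ^ d = ((2:ℝ)^d)^j := by
        rw [← Real.rpow_natCast (2:ℝ) j, ← Real.rpow_mul (by norm_num), mul_comm,
          Real.rpow_mul (by norm_num), Real.rpow_natCast]
      rwa [heq] at h
    calc (∑ y ∈ s.filter (fun y => idx y = j), ((1 + ρ x y / k) ^ N1)⁻¹ * graphMeasure μ y)
        ≤ ∑ y ∈ s.filter (fun y => idx y = j),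
            (2 ^ N1 * (((2:ℝ)^(N1:ℕ))⁻¹) ^ j) * graphMeasure μ y :=
          Finset.sum_le_sum (fun y hy =>
            mul_le_mul_of_nonneg_right (hfb y hy) (hpos y).le)
      _ = (2 ^ N1 * (((2:ℝ)^(N1:ℕ))⁻¹) ^ j)
            * ∑ y ∈ s.filter (fun y => idx y = j), graphMeasure μ y := by
          rw [Finset.mul_sum]
      _ ≤ (2 ^ N1 * (((2:ℝ)^(N1:ℕ))⁻¹) ^ j)
            * (Cd * ((2:ℝ)^d)^j * ballVol (graphMeasure μ) ρ x k) := by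
          apply mul_le_mul_of_nonneg_left (le_trans hmsum hdbl) (by positivity)
      _ = 2 ^ N1 * q ^ j * (Cd * ballVol (graphMeasure μ) ρ x k) := by
          rw [hqdef, mul_pow]
          ring
  have hCdV : 0 ≤ Cd * ballVol (graphMeasure μ) ρ x k := mul_nonneg hCd.le hVk
  calc (∑ j ∈ Finset.range (J+1), ∑ y ∈ s.filter (fun y => idx y = j),
          ((1 + ρ x y / k) ^ N1)⁻¹ * graphMeasure μ y)
      ≤ ∑ j ∈ Finset.range (J+1),
          2 ^ N1 * q ^ j * (Cd * ballVol (graphMeasure μ) ρ x k) :=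
        Finset.sum_le_sum fiber_bound
    _ = 2 ^ N1 * (Cd * ballVol (graphMeasure μ) ρ x k)
          * ∑ j ∈ Finset.range (J+1), q ^ j := by
        rw [Finset.mul_sum]
        exact Finset.sum_congr rfl (fun j _ => by ring)
    _ ≤ 2 ^ N1 * (Cd * ballVol (graphMeasure μ) ρ x k) * 2 := by
        apply mul_le_mul_of_nonneg_left _ (by positivity)
        calc (∑ j ∈ Finset.range (J+1), q ^ j)
            ≤ ∑ j ∈ Finset.range (J+1), ((1:ℝ)/2) ^ j :=
              Finset.sum_le_sum (fun j _ => by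
                apply pow_le_pow_left₀ hq0 hq)
          _ ≤ 2 := geom_half_le_two _
    _ = 2 ^ (N1 + 1) * Cd * ballVol (graphMeasure μ) ρ x k := by
        rw [pow_succ]
        ring


include hpos in
lemma vol_nonneg (x : Γ) (r : ℝ) : 0 ≤ ballVol (graphMeasure μ) ρ x r := by
  rw [vol_eq_indicator]
  exact tsum_nonneg (indicator_m_nonneg μ ρ hpos x r)

end Vol
end Aux

set_option maxHeartbeats 2000000 in
/-- Under doubling (D_β) and the pointwise upper estimate (UE_β), the matching
on-diagonal lower bound holds: `p_{2k}(x,x) ≃ V_ρ(x,k)⁻¹`. -/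
theorem stmt_18 {Γ : Type*} (μ : Γ → Γ → ℝ) (ρ : Γ → Γ → ℝ) (B : ℝ) (hB : 1 ≤ B)
    (hsym : ∀ x y, μ x y = μ y x) (hnonneg : ∀ x y, 0 ≤ μ x y)
    (hfin : ∀ x, {y | μ x y ≠ 0}.Finite) (hpos : ∀ x, 0 < graphMeasure μ x)
    (hρ0 : ∀ x, ρ x x = 0) (hρn : ∀ x y, 0 ≤ ρ x y) (hρs : ∀ x y, ρ x y = ρ y x)
    (hquasi : ∀ x y z, ρ x z ≤ 2 ^ (B - 1) * (ρ x y + ρ y z))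
    (Cd d : ℝ) (hCd : 0 < Cd) (hd : 0 < d)
    (hdouble : ∀ x : Γ, ∀ r lam : ℝ, 0 < r → 1 ≤ lam →
      ballVol (graphMeasure μ) ρ x (lam * r) ≤ Cd * lam ^ d * ballVol (graphMeasure μ) ρ x r)
    (hUE : ∀ N : ℕ, ∃ C : ℝ, 0 < C ∧ ∀ k : ℕ, 1 ≤ k → ∀ x y : Γ,
      iterKernel μ (k - 1) x y
        ≤ C / ballVol (graphMeasure μ) ρ x k * (1 + ρ x y / k) ^ (-(N : ℤ))) :
    ∃ c C : ℝ, 0 < c ∧ 0 < C ∧ ∀ x : Γ, ∀ k : ℕ, 1 ≤ k →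
      c / ballVol (graphMeasure μ) ρ x k ≤ iterKernel μ (2 * k) x x ∧
      iterKernel μ (2 * k) x x ≤ C / ballVol (graphMeasure μ) ρ x k := by
  classical
  set m := graphMeasure μ with hm
  set V : Γ → ℝ → ℝ := fun x r => ballVol m ρ x r with hV
  obtain ⟨C0, hC0, hUE0⟩ := hUE 0
  -- summability and positivity of all balls
  have hVfact : ∀ x : Γ, ∀ r : ℝ, 0 < r →
      Summable (Set.indicator {y | ρ x y < r} m) ∧ 0 < V x r := by
    intro x r hr
    set K : ℕ := 2 * ⌈r⌉₊ + 1 with hK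
    have hK1 : 1 ≤ K := by omega
    have hKr : r ≤ (K:ℝ) := by
      have h1 := Nat.le_ceil r
      have h2 : ((⌈r⌉₊:ℕ):ℝ) ≤ ((K:ℕ):ℝ) := by exact_mod_cast Nat.le_of_lt (by omega)
      linarith
    have hdiag : 0 < iterKernel μ (K - 1) x x := by
      have hKe : K - 1 = 2 * ⌈r⌉₊ := by omega
      rw [hKe]
      exact iter_diag_pos μ hsym hnonneg hfin hpos _ x
    have hb := hUE0 K hK1 x x
    simp only [hρ0, zero_div, add_zero, Nat.cast_zero, neg_zero, zpow_zero, mul_one] at hb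
    have hVK : 0 < V x (K:ℝ) := by
      rcases lt_or_ge 0 (V x (K:ℝ)) with h | h
      · exact h
      · exfalso
        have hVK0 : ballVol m ρ x (K:ℝ) = 0 :=
          le_antisymm h (vol_nonneg μ ρ hpos x _)
        rw [hVK0, div_zero] at hb
        exact absurd hb (not_le.2 hdiag)
    have hsumK : Summable (Set.indicator {y | ρ x y < (K:ℝ)} m) := by
      by_contra h
      have : ballVol m ρ x (K:ℝ) = 0 := by
        rw [vol_eq_indicator]
        exact tsum_eq_zero_of_not_summable h
      exact hVK.ne' this
    have hle : ∀ y, Set.indicator {y | ρ x y < r} m y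
        ≤ Set.indicator {y | ρ x y < (K:ℝ)} m y :=
      fun y => Set.indicator_le_indicator_of_subset
        (fun z hz => lt_of_lt_of_le hz hKr) (fun z => (hpos z).le) y
    have hsumr : Summable (Set.indicator {y | ρ x y < r} m) :=
      Summable.of_nonneg_of_le (indicator_m_nonneg μ ρ hpos x r) hle hsumK
    refine ⟨hsumr, ?_⟩
    have hxmem : x ∈ {y | ρ x y < r} := by
      simp only [Set.mem_setOf_eq, hρ0]; exact hr
    calc (0:ℝ) < m x := hpos x
      _ = Set.indicator {y | ρ x y < r} m x := (Set.indicator_of_mem hxmem m).symm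
      _ ≤ ∑' y, Set.indicator {y | ρ x y < r} m y :=
          Summable.le_tsum hsumr x (fun z _ => indicator_m_nonneg μ ρ hpos x r z)
      _ = V x r := (vol_eq_indicator μ ρ x r).symm
  -- constants
  set N1 : ℕ := ⌈d⌉₊ + 1 with hN1def
  have hN1 : d + 1 ≤ (N1:ℝ) := by
    have := Nat.le_ceil d
    rw [hN1def]
    push_cast
    linarith
  obtain ⟨CN, hCN, hUEN⟩ := hUE (N1 + 1)
  set T : ℝ := CN * 2^(N1+1) * 2^(N1+1) * Cd with hT
  have hTpos : 0 < T := by positivity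
  set Λ : ℝ := 1 + 2 * T with hΛ
  have hΛ1 : 1 ≤ Λ := by linarith
  have hΛpos : 0 < Λ := by linarith
  refine ⟨(1/4)/(Cd * Λ^d), C0, by positivity, hC0, ?_⟩
  intro x k hk
  have hk' : (0:ℝ) < k := by exact_mod_cast hk
  have hVk := hVfact x k hk'
  constructor
  · -- LOWER BOUND
    set S : Finset Γ := (iter_finsupp μ hfin k x).toFinset with hS
    have hvanish : ∀ y ∉ S, iterKernel μ k x y * m y = 0 := by
      intro y hy
      rw [hS, Set.Finite.mem_toFinset] at hy
      simp only [Set.mem_setOf_eq, not_not] at hy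
      rw [hy, zero_mul]
    have hmass : (∑ y ∈ S, iterKernel μ k x y * m y) = 1 := by
      exact (tsum_eq_sum hvanish).symm.trans (iter_mass μ hfin hpos k x)
    set P : Γ → Prop := fun y => ρ x y < Λ * k with hP
    have hsb : ∀ r : ℝ, 0 < r → Summable (Set.indicator {y | ρ x y < r} m) :=
      fun r hr => (hVfact x r hr).1
    have hk'' : (1:ℝ) ≤ (k:ℝ) := by exact_mod_cast hk
    -- tail bound
    have htail : (∑ y ∈ S.filter (fun y => ¬ P y), iterKernel μ k x y * m y) ≤ 1/2 := by
      have hcoeff : (0:ℝ) ≤ CN * 2^(N1+1) / Λ / V x k := by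
        apply div_nonneg _ hVk.2.le
        positivity
      have hterm : ∀ y ∈ S.filter (fun y => ¬ P y),
          iterKernel μ k x y * m y
            ≤ (CN * 2^(N1+1) / Λ / V x k) * (((1 + ρ x y / k)^N1)⁻¹ * m y) := by
        intro y hy
        rw [Finset.mem_filter] at hy
        have hρy : Λ * k ≤ ρ x y := not_lt.1 hy.2
        have hb := hUEN (k+1) (by omega) x y
        have e1 : k + 1 - 1 = k := by omega
        rw [e1] at hb
        have hcast : ((k+1:ℕ):ℝ) = (k:ℝ) + 1 := by push_cast; ring
        rw [hcast] at hb
        set t : ℝ := 1 + ρ x y / ((k:ℝ)+1) with ht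
        have hk1pos : (0:ℝ) < (k:ℝ)+1 := by linarith
        have ht1 : (1:ℝ) ≤ t := le_add_of_nonneg_right (div_nonneg (hρn x y) hk1pos.le)
        have htpos : (0:ℝ) < t := by linarith
        have hzpow : t ^ (-((N1+1:ℕ):ℤ)) = (t^(N1+1))⁻¹ := by
          rw [zpow_neg, zpow_natCast]
        rw [hzpow] at hb
        set u : ℝ := 1 + ρ x y / (k:ℝ) with hu
        have hu1 : (1:ℝ) ≤ u := le_add_of_nonneg_right (div_nonneg (hρn x y) hk'.le)
        have hupos : (0:ℝ) < u := by linarith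
        -- t⁻¹ ≤ 2/Λ
        have htinv : t⁻¹ ≤ 2/Λ := by
          have h2 : Λ * k / ((k:ℝ)+1) ≤ ρ x y / ((k:ℝ)+1) := by gcongr
          have h3 : Λ/2 ≤ Λ * k / ((k:ℝ)+1) := by
            rw [div_le_div_iff₀ (by norm_num) hk1pos]
            nlinarith
          have h4 : Λ/2 ≤ t := by
            have : Λ * k / ((k:ℝ)+1) ≤ t := by
              rw [ht]; linarith
            linarith
          have h5 : t⁻¹ ≤ (Λ/2)⁻¹ := inv_anti₀ (by positivity) h4
          rwa [inv_div] at h5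
        -- (t^N1)⁻¹ ≤ 2^N1 * (u^N1)⁻¹
        have hN1inv : (t^N1)⁻¹ ≤ 2^N1 * (u^N1)⁻¹ := by
          have h5 : u ≤ 2 * t := by
            have h6 : ρ x y / k ≤ 2 * (ρ x y / ((k:ℝ)+1)) := by
              rw [← mul_div_assoc, div_le_div_iff₀ hk' hk1pos]
              nlinarith [hρn x y, hk'']
            rw [hu, ht]; linarith
          have h6 : u^N1 ≤ (2*t)^N1 := pow_le_pow_left₀ hupos.le h5 N1
          have h7 : (2*t)^N1 = 2^N1 * t^N1 := mul_pow 2 t N1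
          have h8 : ((2:ℝ)^N1 * t^N1)⁻¹ ≤ (u^N1)⁻¹ := by
            apply inv_anti₀ (by positivity)
            rw [← h7]; exact h6
          calc (t^N1)⁻¹ = 2^N1 * ((2:ℝ)^N1 * t^N1)⁻¹ := by
                rw [mul_inv, ← mul_assoc, mul_inv_cancel₀ (by positivity), one_mul]
            _ ≤ 2^N1 * (u^N1)⁻¹ :=
                mul_le_mul_of_nonneg_left h8 (by positivity)
        have hVmono1 : V x (k:ℝ) ≤ V x ((k:ℝ)+1) := by
          apply vol_mono μ ρ hpos x (by linarith)
          exact hsb ((k:ℝ)+1) (by linarith)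
        have hVdiv : CN / V x ((k:ℝ)+1) ≤ CN / V x (k:ℝ) :=
          div_le_div_of_nonneg_left hCN.le hVk.2 hVmono1
        have hsplit : (t^(N1+1))⁻¹ = (t^N1)⁻¹ * t⁻¹ := by
          rw [pow_succ, mul_inv]
        have hp_le : iterKernel μ k x y ≤ (CN * 2^(N1+1) / Λ / V x k) * (u^N1)⁻¹ := by
          calc iterKernel μ k x y ≤ CN / V x ((k:ℝ)+1) * (t^(N1+1))⁻¹ := hb
            _ ≤ CN / V x (k:ℝ) * (t^(N1+1))⁻¹ := by
                apply mul_le_mul_of_nonneg_right hVdiv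
                positivity
            _ = CN / V x (k:ℝ) * ((t^N1)⁻¹ * t⁻¹) := by rw [hsplit]
            _ ≤ CN / V x (k:ℝ) * ((2^N1 * (u^N1)⁻¹) * (2/Λ)) := by
                apply mul_le_mul_of_nonneg_left _ (div_nonneg hCN.le hVk.2.le)
                apply mul_le_mul hN1inv htinv (by positivity) (by positivity)
            _ = (CN * 2^(N1+1) / Λ / V x k) * (u^N1)⁻¹ := by
                rw [pow_succ]
                field_simp
                ring
        calc iterKernel μ k x y * m y
            ≤ ((CN * 2^(N1+1) / Λ / V x k) * (u^N1)⁻¹) * m y :=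
              mul_le_mul_of_nonneg_right hp_le (hpos y).le
          _ = (CN * 2^(N1+1) / Λ / V x k) * ((u^N1)⁻¹ * m y) := by ring
      have hann := annuli_bound μ ρ hpos hρn Cd d hCd hd hdouble x k hk N1 hN1
        hsb hVk.2.le (S.filter (fun y => ¬ P y))
      calc (∑ y ∈ S.filter (fun y => ¬ P y), iterKernel μ k x y * m y)
          ≤ ∑ y ∈ S.filter (fun y => ¬ P y),
              (CN * 2^(N1+1) / Λ / V x k) * (((1 + ρ x y / k)^N1)⁻¹ * m y) :=
            Finset.sum_le_sum hterm
        _ = (CN * 2^(N1+1) / Λ / V x k)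
              * ∑ y ∈ S.filter (fun y => ¬ P y), ((1 + ρ x y / k)^N1)⁻¹ * m y := by
            rw [Finset.mul_sum]
        _ ≤ (CN * 2^(N1+1) / Λ / V x k) * (2^(N1+1) * Cd * V x k) :=
            mul_le_mul_of_nonneg_left hann hcoeff
        _ = (CN * 2^(N1+1) * (2^(N1+1) * Cd)) / Λ * (V x k / V x k) := by
            ring
        _ = T / Λ := by
            rw [div_self hVk.2.ne', mul_one, hT]
            congr 1
            ring
        _ ≤ 1/2 := by
            rw [div_le_iff₀ hΛpos]
            linarith
    have hsplit := Finset.sum_filter_add_sum_filter_not S P (fun y => iterKernel μ k x y * m y)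
    rw [hmass] at hsplit
    have hin : 1/2 ≤ ∑ y ∈ S.filter (fun y => P y), iterKernel μ k x y * m y := by
      linarith [hsplit, htail]
    set Sin := S.filter (fun y => P y) with hSin
    have hCS := Finset.sum_mul_sq_le_sq_mul_sq Sin
      (fun y => iterKernel μ k x y * Real.sqrt (m y)) (fun y => Real.sqrt (m y))
    have e1 : ∀ y ∈ Sin, (iterKernel μ k x y * Real.sqrt (m y)) * Real.sqrt (m y)
        = iterKernel μ k x y * m y := by
      intro y _
      rw [mul_assoc, Real.mul_self_sqrt (hpos y).le]
    have e2 : ∀ y ∈ Sin, (iterKernel μ k x y * Real.sqrt (m y))^2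
        = (iterKernel μ k x y)^2 * m y := by
      intro y _
      rw [mul_pow, Real.sq_sqrt (hpos y).le]
    have e3 : ∀ y ∈ Sin, (Real.sqrt (m y))^2 = m y := by
      intro y _
      exact Real.sq_sqrt (hpos y).le
    rw [Finset.sum_congr rfl e1, Finset.sum_congr rfl e2, Finset.sum_congr rfl e3] at hCS
    have h1 : (∑ y ∈ Sin, (iterKernel μ k x y)^2 * m y) ≤ iterKernel μ (2*k) x x := by
      rw [iter_diag μ hsym hfin hpos k x]
      rw [tsum_eq_sum (s := S) (f := fun y => (iterKernel μ k x y)^2 * m y) (fun y hy => by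
        rw [hS, Set.Finite.mem_toFinset] at hy
        simp only [Set.mem_setOf_eq, not_not] at hy
        simp [hy])]
      exact Finset.sum_le_sum_of_subset_of_nonneg (Finset.filter_subset _ _)
        (fun y _ _ => mul_nonneg (sq_nonneg _) (hpos y).le)
    have h2 : (∑ y ∈ Sin, m y) ≤ V x (Λ * k) := by
      apply sum_le_vol μ ρ hpos x (Λ*k) Sin _ (hsb (Λ*k) (by positivity))
      intro y hy
      rw [hSin, Finset.mem_filter] at hy
      exact hy.2
    have h3 : V x (Λ * k) ≤ Cd * Λ^d * V x k := hdouble x (k:ℝ) Λ hk' hΛ1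
    have hVΛnn : (0:ℝ) ≤ ∑ y ∈ Sin, m y :=
      Finset.sum_nonneg (fun y _ => (hpos y).le)
    have hp2nn : (0:ℝ) ≤ iterKernel μ (2*k) x x := iter_nonneg μ hnonneg hpos _ x x
    have h4 : (1/4:ℝ) ≤ iterKernel μ (2*k) x x * (Cd * Λ^d * V x k) := by
      have ha : ((1:ℝ)/2)^2 ≤ (∑ y ∈ Sin, iterKernel μ k x y * m y)^2 :=
        pow_le_pow_left₀ (by norm_num) hin 2
      have hb2 : (∑ y ∈ Sin, (iterKernel μ k x y)^2 * m y) * (∑ y ∈ Sin, m y)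
          ≤ iterKernel μ (2*k) x x * (Cd * Λ^d * V x k) := by
        apply mul_le_mul h1 (h2.trans h3) hVΛnn hp2nn
      calc (1/4:ℝ) = ((1:ℝ)/2)^2 := by norm_num
        _ ≤ (∑ y ∈ Sin, iterKernel μ k x y * m y)^2 := ha
        _ ≤ (∑ y ∈ Sin, (iterKernel μ k x y)^2 * m y) * (∑ y ∈ Sin, m y) := hCS
        _ ≤ _ := hb2
    rw [div_div, div_le_iff₀ (mul_pos (by positivity) hVk.2)]
    linarith [h4]
  · -- UPPER BOUND
    have hb := hUE0 (2*k+1) (by omega) x x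
    simp only [hρ0, zero_div, add_zero, Nat.cast_zero, neg_zero, zpow_zero, mul_one] at hb
    have e : 2*k+1-1 = 2*k := by omega
    rw [e] at hb
    have hVmono : V x k ≤ V x ((2*k+1:ℕ):ℝ) := by
      apply vol_mono μ ρ hpos x (by push_cast; linarith)
      exact (hVfact x ((2*k+1:ℕ):ℝ) (by push_cast; linarith)).1
    calc iterKernel μ (2*k) x x ≤ C0 / V x ((2*k+1:ℕ):ℝ) := hb
      _ ≤ C0 / V x k := by
          apply div_le_div_of_nonneg_left hC0.le hVk.2 hVmono
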